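/- Fix m ≥ 1 and let f : ℕ → ℕ be defined by f(0) = 2, f(1) = 8, and f(k) = 7f(k−1) + 4f(k−2) for k ≥ 2. Let c = c_{m−1} ... c_0 be a codeword of OPC(m), with symbols viewed as natural numbers in {0,...,7}. For 0 ≤ i ≤ m−1 define: y_{i,1} = 1 if i+2 ≤ m−1 and either (c_{i+2} ∈ {0,1,4,5}, c_{i+1} = 2, c_i ∈ {2,3}) or (c_{i+2} ∈ {2,3,6,7}, c_{i+1} = 5, c_i ∈ {4,5}), and y_{i,1} = 0 otherwise; y_{i,2} = 1 if i+2 ≤ m−1, c_{i+2} ∈ {0,1,4,5}, c_{i+1} = 2, and c_i ∈ {6,7}, and y_{i,2} = 0 otherwise; y_{i,3} = 1 if y_{i,1} = y_{i,2} = 0, i+1 ≤ m−1, and either (c_{i+1} ∈ {0,1,4,5} and c_i ∈ {3,4,5,6,7}) or (c_{i+1} ∈ {2,3,6,7} and c_i ∈ {6,7}), and y_{i,3} = 0 otherwise. Then the lexicographic index g(c) of c in OPC(m) satisfies 8·g(c) = Σ_{i=0}^{m−1} [ (c_i − 2y_{i,1} − 4y_{i,2} − y_{i,3}) · f(i+1)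 + 4 y_{i,3} · f(i) ] (an equality of integers). -/

import Mathlib

/-- The OP-LOCO code: words of length `m` over the alphabet `{0,...,7}`
(position `m-1` most significant) containing no contiguous subword `u 2 v` with
`u, v ∈ {0,1,4,5}` and no contiguous subword `u 5 v` with `u, v ∈ {2,3,6,7}`. -/
def OPC (m : ℕ) : Set (Fin m → Fin 8) :=
  {c | ∀ i : ℕ, ∀ h : i + 2 < m,
      ¬((c ⟨i + 2, h⟩ ∈ ({0, 1, 4, 5} : Set (Fin 8)) ∧ c ⟨i + 1, by omega⟩ = 2 ∧
            c ⟨i, by omega⟩ ∈ ({0, 1, 4, 5} : Set (Fin 8))) ∨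
        (c ⟨i + 2, h⟩ ∈ ({2, 3, 6, 7} : Set (Fin 8)) ∧ c ⟨i + 1, by omega⟩ = 5 ∧
            c ⟨i, by omega⟩ ∈ ({2, 3, 6, 7} : Set (Fin 8))))}

/-- `w` is lexicographically smaller than `c` (position `m-1` most significant):
at the most significant position where they differ, `w` has the smaller symbol. -/
def wordLT {m q : ℕ} (w c : Fin m → Fin q) : Prop :=
  ∃ k : Fin m, w k < c k ∧ ∀ j : Fin m, k < j → w j = c j

/-- The lexicographic index of `c` in the code `C`: the number of codewords of
`C` lexicographically smaller than `c`. -/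
noncomputable def lexIndex {m q : ℕ} (C : Set (Fin m → Fin q)) (c : Fin m → Fin q) : ℕ :=
  {w ∈ C | wordLT w c}.ncard

/-- The natural-number value of symbol `c_i`, with an out-of-alphabet default
for out-of-range indices. -/
def extVal {m q : ℕ} (c : Fin m → Fin q) (i : ℕ) : ℕ :=
  if h : i < m then (c ⟨i, h⟩ : ℕ) else q

/-- `y_{i,1} = 1` iff `i+2 ≤ m-1` and either (`c_{i+2} ∈ {0,1,4,5}`, `c_{i+1} = 2`,
`c_i ∈ {2,3}`) or (`c_{i+2} ∈ {2,3,6,7}`, `c_{i+1} = 5`, `c_i ∈ {4,5}`). -/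
def opY1 {m : ℕ} (c : Fin m → Fin 8) (i : ℕ) : ℤ :=
  if i + 2 < m ∧
      ((extVal c (i + 2) ∈ ({0, 1, 4, 5} : Finset ℕ) ∧ extVal c (i + 1) = 2 ∧
          extVal c i ∈ ({2, 3} : Finset ℕ)) ∨
        (extVal c (i + 2) ∈ ({2, 3, 6, 7} : Finset ℕ) ∧ extVal c (i + 1) = 5 ∧
          extVal c i ∈ ({4, 5} : Finset ℕ)))
  then 1 else 0

/-- `y_{i,2} = 1` iff `i+2 ≤ m-1`, `c_{i+2} ∈ {0,1,4,5}`, `c_{i+1} = 2`, `c_i ∈ {6,7}`. -/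
def opY2 {m : ℕ} (c : Fin m → Fin 8) (i : ℕ) : ℤ :=
  if i + 2 < m ∧ extVal c (i + 2) ∈ ({0, 1, 4, 5} : Finset ℕ) ∧ extVal c (i + 1) = 2 ∧
      extVal c i ∈ ({6, 7} : Finset ℕ)
  then 1 else 0

/-- `y_{i,3} = 1` iff `y_{i,1} = y_{i,2} = 0`, `i+1 ≤ m-1`, and either
(`c_{i+1} ∈ {0,1,4,5}` and `c_i ∈ {3,...,7}`) or (`c_{i+1} ∈ {2,3,6,7}` and `c_i ∈ {6,7}`). -/
def opY3 {m : ℕ} (c : Fin m → Fin 8) (i : ℕ) : ℤ :=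
  if opY1 c i = 0 ∧ opY2 c i = 0 ∧ i + 1 < m ∧
      ((extVal c (i + 1) ∈ ({0, 1, 4, 5} : Finset ℕ) ∧
          extVal c i ∈ ({3, 4, 5, 6, 7} : Finset ℕ)) ∨
        (extVal c (i + 1) ∈ ({2, 3, 6, 7} : Finset ℕ) ∧ extVal c i ∈ ({6, 7} : Finset ℕ)))
  then 1 else 0

namespace OP

abbrev Lset : Finset ℕ := {0,1,4,5}
abbrev Rset : Finset ℕ := {2,3,6,7}
def FnB (x y z : ℕ) : Prop := (x ∈ Lset ∧ y = 2 ∧ z ∈ Lset) ∨ (x ∈ Rset ∧ y = 5 ∧ z ∈ Rset)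
instance (x y z : ℕ) : Decidable (FnB x y z) := by unfold FnB; exact inferInstance
def blk (b a : ℕ) : Prop := (a ∈ Lset ∧ b = 2) ∨ (a ∈ Rset ∧ b = 5)
instance (b a : ℕ) : Decidable (blk b a) := by unfold blk; exact inferInstance

def ctx {n : ℕ} (w : Fin n → Fin 8) (p q : ℕ) (i : ℕ) : ℕ :=
  if h : i < n then (w ⟨i, h⟩ : ℕ) else if i = n then p else if i = n + 1 then q else 8

def CW (n : ℕ) (p q : ℕ) : Finset (Fin n → Fin 8) :=
  Finset.univ.filter (fun w => ∀ i < n, ¬ FnB (ctx w p q (i+2)) (ctx w p q (i+1)) (ctx w p q i))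

def Pc : ℕ → ℕ
  | 0 => 1
  | 1 => 8
  | (n+2) => 7 * Pc (n+1) + 4 * Pc n

def Qc : ℕ → ℕ
  | 0 => 1
  | (n+1) => 4 * Pc n

lemma Pc_succ (n : ℕ) : Pc (n+1) = 7 * Pc n + Qc n := by
  cases n with
  | zero => simp [Pc, Qc]
  | succ k => rw [Pc, Qc]

lemma sum_step (p q : ℕ) (hp : p < 8) (hq : q ≤ 8) (A B : ℕ) :
    (∑ v : Fin 8, if FnB q p (v : ℕ) then 0 else if blk (v : ℕ) p then B else A)
      = if blk p q then 4 * A else 7 * A + B := by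
  interval_cases p <;> interval_cases q <;>
    simp (config := { decide := true }) [Fin.sum_univ_eight, FnB, blk] <;> ring

lemma ctx_hi {n : ℕ} (w : Fin n → Fin 8) (p q : ℕ) :
    ctx w p q n = p ∧ ctx w p q (n+1) = q := by
  constructor
  · unfold ctx; rw [dif_neg (by omega), if_pos rfl]
  · unfold ctx; rw [dif_neg (by omega), if_neg (by omega), if_pos rfl]

lemma ctx_init {n : ℕ} (w : Fin (n+1) → Fin 8) (p q : ℕ) (i : ℕ) (hi : i ≤ n + 1) :
    ctx (Fin.init w) ((w (Fin.last n) : ℕ)) p i = ctx w p q i := by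
  unfold ctx
  rcases lt_trichotomy i n with h | h | h
  · rw [dif_pos h, dif_pos (by omega)]
    rfl
  · subst h
    rw [dif_neg (by omega), if_pos rfl, dif_pos (by omega)]
    rfl
  · have h1 : i = n + 1 := by omega
    subst h1
    rw [dif_neg (by omega), if_neg (by omega), if_pos rfl, dif_neg (by omega), if_pos rfl]

lemma fiber_card (n p q : ℕ) (v : Fin 8) :
    ((CW (n+1) p q).filter (fun w => w (Fin.last n) = v)).card
      = if FnB q p (v : ℕ) then 0 else (CW n (v : ℕ) p).card := by
  have ctxn : ∀ w : Fin (n+1) → Fin 8, ctx w p q n = (w (Fin.last n) : ℕ) := by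
    intro w; unfold ctx; rw [dif_pos (by omega)]; rfl
  split_ifs with hF
  · rw [Finset.card_eq_zero, Finset.filter_eq_empty_iff]
    rintro w hw
    simp only [CW, Finset.mem_filter, Finset.mem_univ, true_and] at hw
    intro hv
    apply hw n (by omega)
    rw [(ctx_hi w p q).2, show ctx w p q (n+1) = p from (ctx_hi w p q).1, ctxn w, hv]
    exact hF
  · refine Finset.card_bij' (fun w _ => Fin.init w) (fun w' _ => Fin.snoc w' v) ?hi ?hj ?left ?right
    case hi =>
      rintro w hw
      simp only [Finset.mem_filter, CW, Finset.mem_univ, true_and] at hw ⊢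
      intro i hi
      have hv' : ((v : ℕ)) = ((w (Fin.last n) : ℕ)) := by rw [hw.2]
      rw [hv', ctx_init w p q (i+2) (by omega), ctx_init w p q (i+1) (by omega),
        ctx_init w p q i (by omega)]
      exact hw.1 i (by omega)
    case hj =>
      rintro w' hw'
      simp only [Finset.mem_filter, CW, Finset.mem_univ, true_and] at hw' ⊢
      have hl : (Fin.snoc w' v : Fin (n+1) → Fin 8) (Fin.last n) = v := by simp
      refine ⟨?_, hl⟩
      intro i hi
      rcases Nat.lt_or_ge i n with h | h
      · have key : ∀ j, j ≤ n+1 → ctx (Fin.snoc w' v) p q j = ctx w' (v : ℕ) p j := by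
          intro j hj
          rw [← ctx_init (Fin.snoc w' v) p q j hj, hl]
          congr 1
          simp
        rw [key (i+2) (by omega), key (i+1) (by omega), key i (by omega)]
        exact hw' i h
      · have hi' : i = n := by omega
        rw [hi']
        rw [(ctx_hi ((Fin.snoc w' v : Fin (n+1) → Fin 8)) p q).2,
          show ctx (Fin.snoc w' v) p q (n+1) = p from (ctx_hi (Fin.snoc w' v) p q).1,
          ctxn _, hl]
        exact hF
    case left =>
      intro w hw
      simp only [Finset.mem_filter] at hw
      show Fin.snoc (Fin.init w) v = w
      rw [← hw.2]
      exact Fin.snoc_init_self w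
    case right =>
      intro w' _
      show Fin.init (Fin.snoc w' v : Fin (n+1) → Fin 8) = w'
      simp

lemma CW_card : ∀ (n : ℕ) (p q : ℕ), p < 8 → q ≤ 8 →
    (CW n p q).card = if blk p q then Qc n else Pc n := by
  intro n
  induction n with
  | zero =>
    intro p q _ _
    have : (CW 0 p q) = Finset.univ := by
      apply Finset.eq_univ_of_forall
      intro w
      simp only [CW, Finset.mem_filter, Finset.mem_univ, true_and]
      intro i hi
      omega
    rw [this]
    have : (Finset.univ : Finset (Fin 0 → Fin 8)).card = 1 := by
      rw [Finset.card_univ]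
      simp
    rw [this]
    split_ifs <;> rfl
  | succ n ih =>
    intro p q hp hq
    rw [Finset.card_eq_sum_card_fiberwise (f := fun w => w (Fin.last n))
      (t := Finset.univ) (fun x _ => Finset.mem_univ _)]
    have step : ∀ v : Fin 8, ((CW (n+1) p q).filter (fun w => w (Fin.last n) = v)).card
        = if FnB q p (v : ℕ) then 0 else if blk (v : ℕ) p then Qc n else Pc n := by
      intro v
      rw [fiber_card]
      by_cases h : FnB q p (v : ℕ)
      · rw [if_pos h, if_pos h]
      · rw [if_neg h, if_neg h, ih (v : ℕ) p v.isLt (by omega)]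
    rw [Finset.sum_congr rfl (fun v _ => step v), sum_step p q hp hq (Pc n) (Qc n)]
    split_ifs
    · rfl
    · exact (Pc_succ n).symm

def z1 (a2 a1 t : ℕ) : ℕ :=
  if (a2 ∈ Lset ∧ a1 = 2 ∧ t ∈ ({2,3} : Finset ℕ)) ∨
      (a2 ∈ Rset ∧ a1 = 5 ∧ t ∈ ({4,5} : Finset ℕ)) then 1 else 0
def z2 (a2 a1 t : ℕ) : ℕ :=
  if a2 ∈ Lset ∧ a1 = 2 ∧ t ∈ ({6,7} : Finset ℕ) then 1 else 0
def z3 (a2 a1 t : ℕ) : ℕ :=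
  if z1 a2 a1 t = 0 ∧ z2 a2 a1 t = 0 ∧
      ((a1 ∈ Lset ∧ t ∈ ({3,4,5,6,7} : Finset ℕ)) ∨ (a1 ∈ Rset ∧ t ∈ ({6,7} : Finset ℕ)))
  then 1 else 0

lemma key : ∀ a2 < 9, ∀ a1 < 9, ∀ t < 8, ¬ FnB a2 a1 t →
    ((Finset.univ.filter
        (fun b : Fin 8 => ((b : ℕ) < t ∧ ¬ FnB a2 a1 (b : ℕ)) ∧ ¬ blk (b : ℕ) a1)).card
        + 2 * z1 a2 a1 t + 4 * z2 a2 a1 t + z3 a2 a1 t = t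
      ∧ (Finset.univ.filter
          (fun b : Fin 8 => ((b : ℕ) < t ∧ ¬ FnB a2 a1 (b : ℕ)) ∧ blk (b : ℕ) a1)).card
          = z3 a2 a1 t) := by decide

section FL
variable (f : ℕ → ℕ) (hf0 : f 0 = 2) (hf1 : f 1 = 8)
  (hrec : ∀ k : ℕ, 2 ≤ k → f k = 7 * f (k - 1) + 4 * f (k - 2))

include hf0 hf1 hrec in
lemma fP : ∀ k, f (k + 1) = 8 * Pc k := by
  intro k
  induction k using Nat.strong_induction_on with
  | _ k ih =>
    match k with
    | 0 => simpa [Pc] using hf1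
    | 1 =>
      have := hrec 2 (by norm_num)
      norm_num at this
      rw [this, hf0, hf1]
      rfl
    | (k+2) =>
      have := hrec (k+3) (by omega)
      simp only [show k+3-1 = k+2 from by omega, show k+3-2 = k+1 from by omega] at this
      rw [show k + 2 + 1 = k + 3 from rfl, this, ih (k+1) (by omega), ih k (by omega), Pc]
      ring

include hf0 hf1 hrec in
lemma fQ : ∀ k, 4 * f k = 8 * Qc k := by
  intro k
  cases k with
  | zero => rw [hf0]; rfl
  | succ n => rw [Qc, fP f hf0 hf1 hrec n]; ring

end FL

section Main
variable {m : ℕ}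

def NN (m : ℕ) : Finset (Fin m → Fin 8) :=
  Finset.univ.filter
    (fun w => ∀ i < m, ¬ FnB (extVal w (i+2)) (extVal w (i+1)) (extVal w i))

lemma extVal_lt (w : Fin m → Fin 8) {i : ℕ} (h : i < m) : extVal w i = (w ⟨i, h⟩ : ℕ) :=
  dif_pos h

lemma extVal_ge (w : Fin m → Fin 8) {i : ℕ} (h : m ≤ i) : extVal w i = 8 :=
  dif_neg (by omega)

lemma extVal_le (w : Fin m → Fin 8) (i : ℕ) : extVal w i ≤ 8 := by
  unfold extVal
  split
  · exact le_of_lt (by exact (w _).isLt)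
  · exact le_refl _

lemma not_FnB_top (y z : ℕ) : ¬ FnB 8 y z := by
  rintro (⟨h, -, -⟩ | ⟨h, -, -⟩) <;> revert h <;> decide

lemma setL_iff (a : Fin 8) : a ∈ ({0, 1, 4, 5} : Set (Fin 8)) ↔ (a : ℕ) ∈ Lset := by
  fin_cases a <;> simp

lemma setR_iff (a : Fin 8) : a ∈ ({2, 3, 6, 7} : Set (Fin 8)) ↔ (a : ℕ) ∈ Rset := by
  fin_cases a <;> simp

lemma eq2_iff (a : Fin 8) : a = 2 ↔ (a : ℕ) = 2 := by fin_cases a <;> simp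
lemma eq5_iff (a : Fin 8) : a = 5 ↔ (a : ℕ) = 5 := by fin_cases a <;> simp

lemma FnB_fin_iff (x y z : Fin 8) :
    FnB (x : ℕ) (y : ℕ) (z : ℕ) ↔
      ((x ∈ ({0, 1, 4, 5} : Set (Fin 8)) ∧ y = 2 ∧ z ∈ ({0, 1, 4, 5} : Set (Fin 8))) ∨
        (x ∈ ({2, 3, 6, 7} : Set (Fin 8)) ∧ y = 5 ∧ z ∈ ({2, 3, 6, 7} : Set (Fin 8)))) := by
  unfold FnB
  rw [setL_iff x, setL_iff z, setR_iff x, setR_iff z, eq2_iff y, eq5_iff y]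

lemma mem_OPC_iff (c : Fin m → Fin 8) : c ∈ OPC m ↔ c ∈ NN m := by
  simp only [NN, Finset.mem_filter, Finset.mem_univ, true_and, OPC, Set.mem_setOf_eq]
  constructor
  · intro h i hi
    by_cases h2 : i + 2 < m
    · rw [extVal_lt c h2, extVal_lt c (show i + 1 < m by omega), extVal_lt c (show i < m by omega)]
      rw [FnB_fin_iff]
      exact h i h2
    · rw [extVal_ge c (show m ≤ i + 2 by omega)]
      exact not_FnB_top _ _
  · intro h i hi
    have := h i (by omega)
    rw [extVal_lt c hi, extVal_lt c (show i + 1 < m by omega),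
      extVal_lt c (show i < m by omega), FnB_fin_iff] at this
    exact this

end Main

instance wordLT.dec {m q : ℕ} (w c : Fin m → Fin q) : Decidable (wordLT w c) := by
  unfold wordLT; exact inferInstance

section Main2
variable {m : ℕ}

def Sk (c : Fin m → Fin 8) (k : Fin m) : Finset (Fin m → Fin 8) :=
  (NN m).filter (fun w => w k < c k ∧ ∀ j : Fin m, k < j → w j = c j)

lemma lex_card (c : Fin m → Fin 8) :
    lexIndex (OPC m) c = ((NN m).filter (fun w => wordLT w c)).card := by
  unfold lexIndex
  have hs : {w ∈ OPC m | wordLT w c} = ↑((NN m).filter (fun w => wordLT w c)) := by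
    ext w
    simp only [Set.mem_setOf_eq, Finset.coe_filter, mem_OPC_iff]
  rw [hs, Set.ncard_coe_finset]

lemma decomp (c : Fin m → Fin 8) :
    (NN m).filter (fun w => wordLT w c) = Finset.univ.biUnion (fun k : Fin m => Sk c k) := by
  ext w
  simp only [Finset.mem_filter, Finset.mem_biUnion, Finset.mem_univ, true_and, Sk]
  simp only [wordLT]
  constructor
  · rintro ⟨hN, k, hk1, hk2⟩; exact ⟨k, hN, hk1, hk2⟩
  · rintro ⟨k, hN, h1, h2⟩; exact ⟨hN, k, h1, h2⟩

lemma disj (c : Fin m → Fin 8) : ∀ k ∈ (Finset.univ : Finset (Fin m)), ∀ l ∈ Finset.univ,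
    k ≠ l → Disjoint (Sk c k) (Sk c l) := by
  intro k _ l _ hkl
  rw [Finset.disjoint_left]
  intro w hw1 hw2
  simp only [Sk, Finset.mem_filter] at hw1 hw2
  rcases lt_or_gt_of_ne hkl with h | h
  · exact absurd (hw1.2.2 l h) (ne_of_lt hw2.2.1)
  · exact absurd (hw2.2.2 k h) (ne_of_lt hw1.2.1)

/-- the restriction map -/
def rho (k : Fin m) (w : Fin m → Fin 8) : Fin (k : ℕ) → Fin 8 :=
  fun j => w ⟨(j : ℕ), lt_trans j.isLt k.isLt⟩

/-- gluing a completion below position `k` with symbol `b` at `k` and `c` above -/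
def glue (c : Fin m → Fin 8) (k : Fin m) (b : Fin 8) (w' : Fin (k : ℕ) → Fin 8) :
    Fin m → Fin 8 :=
  fun j => if h : (j : ℕ) < (k : ℕ) then w' ⟨(j : ℕ), h⟩ else if (j : ℕ) = (k : ℕ) then b else c j

lemma extVal_agree (c w : Fin m → Fin 8) (k : Fin m)
    (hag : ∀ j : Fin m, k < j → w j = c j) {i : ℕ} (hi : (k : ℕ) < i) :
    extVal w i = extVal c i := by
  by_cases h : i < m
  · rw [extVal_lt w h, extVal_lt c h]
    rw [hag ⟨i, h⟩ (by rw [Fin.lt_def]; exact hi)]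
  · rw [extVal_ge w (by omega), extVal_ge c (by omega)]

lemma ctx_rho (c w : Fin m → Fin 8) (k : Fin m) (b : Fin 8)
    (hag : ∀ j : Fin m, k < j → w j = c j) (hk : w k = b)
    {i : ℕ} (hi : i ≤ (k : ℕ) + 1) :
    ctx (rho k w) (b : ℕ) (extVal c ((k : ℕ) + 1)) i = extVal w i := by
  unfold ctx
  rcases lt_trichotomy i (k : ℕ) with h | h | h
  · rw [dif_pos h, extVal_lt w (lt_trans h k.isLt)]
    rfl
  · subst h
    rw [dif_neg (by omega), if_pos rfl, extVal_lt w k.isLt]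
    rw [show (⟨(k : ℕ), k.isLt⟩ : Fin m) = k from Fin.eta k k.isLt, hk]
  · have h1 : i = (k : ℕ) + 1 := by omega
    subst h1
    rw [dif_neg (by omega), if_neg (by omega), if_pos rfl,
      extVal_agree c w k hag (by omega)]

lemma Sk_fiber (c : Fin m → Fin 8) (hc : c ∈ NN m) (k : Fin m) (b : Fin 8) :
    ((Sk c k).filter (fun w => w k = b)).card =
      if ((b : ℕ) < ((c k) : ℕ) ∧
          ¬ FnB (extVal c ((k : ℕ) + 2)) (extVal c ((k : ℕ) + 1)) (b : ℕ))
      then (CW (k : ℕ) (b : ℕ) (extVal c ((k : ℕ) + 1))).card else 0 := by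
  simp only [NN, Finset.mem_filter, Finset.mem_univ, true_and] at hc
  split_ifs with hcond
  · -- bijection
    refine Finset.card_bij' (fun w _ => rho k w) (fun w' _ => glue c k b w') ?hi ?hj ?left ?right
    case hi =>
      intro w hw
      simp only [Sk, Finset.mem_filter, NN, Finset.mem_univ, true_and, CW] at hw ⊢
      obtain ⟨⟨hN, hlt, hag⟩, hkb⟩ := hw
      intro i hilt
      rw [ctx_rho c w k b hag hkb (by omega), ctx_rho c w k b hag hkb (by omega),
        ctx_rho c w k b hag hkb (by omega)]
      exact hN i (by omega)
    case hj =>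
      intro w' hw'
      simp only [CW, Finset.mem_filter, Finset.mem_univ, true_and] at hw'
      have hag : ∀ j : Fin m, k < j → glue c k b w' j = c j := by
        intro j hj
        rw [Fin.lt_def] at hj
        unfold glue
        rw [dif_neg (by omega), if_neg (by omega)]
      have hkb : glue c k b w' k = b := by
        unfold glue
        rw [dif_neg (by omega), if_pos rfl]
      have hrg : rho k (glue c k b w') = w' := by
        funext j
        show glue c k b w' ⟨(j : ℕ), _⟩ = w' j
        unfold glue
        rw [dif_pos j.isLt]
      simp only [Sk, Finset.mem_filter, NN, Finset.mem_univ, true_and]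
      refine ⟨⟨?_, ?_, hag⟩, hkb⟩
      · -- glue ∈ NN
        intro i hilt
        rcases lt_trichotomy i (k : ℕ) with h | h | h
        · rw [← ctx_rho c _ k b hag hkb (show i ≤ (k:ℕ)+1 by omega),
            ← ctx_rho c _ k b hag hkb (show i+1 ≤ (k:ℕ)+1 by omega),
            ← ctx_rho c _ k b hag hkb (show i+2 ≤ (k:ℕ)+1 by omega)] <;> try omega
          rw [hrg]
          exact hw' i h
        · subst h
          rw [extVal_agree c _ k hag (by omega), extVal_agree c _ k hag (by omega)]
          rw [extVal_lt _ k.isLt, show (⟨((k:ℕ) : ℕ), k.isLt⟩ : Fin m) = k from Fin.eta k k.isLt, hkb]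
          exact hcond.2
        · rw [extVal_agree c _ k hag (by omega), extVal_agree c _ k hag (by omega),
            extVal_agree c _ k hag (by omega)]
          exact hc i hilt
      · -- glue k < c k
        rw [Fin.lt_def, hkb]
        exact hcond.1
    case left =>
      intro w hw
      simp only [Sk, Finset.mem_filter] at hw
      funext j
      show glue c k b (rho k w) j = w j
      unfold glue
      split_ifs with h1 h2
      · rfl
      · rw [← hw.2]
        congr 1
        apply Fin.ext
        exact h2.symm
      · rw [hw.1.2.2 j (by rw [Fin.lt_def]; omega)]
    case right =>
      intro w' _
      funext j
      show glue c k b w' ⟨(j : ℕ), _⟩ = w' j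
      unfold glue
      rw [dif_pos j.isLt]
  · -- empty
    rw [Finset.card_eq_zero, Finset.filter_eq_empty_iff]
    intro w hw
    simp only [Sk, Finset.mem_filter, NN, Finset.mem_univ, true_and] at hw
    obtain ⟨hN, hlt, hag⟩ := hw
    intro hkb
    apply hcond
    constructor
    · rw [← hkb]; exact hlt
    · have := hN (k : ℕ) k.isLt
      rw [extVal_agree c w k hag (by omega), extVal_agree c w k hag (by omega),
        extVal_lt w k.isLt, show (⟨(k:ℕ), k.isLt⟩ : Fin m) = k from Fin.eta k k.isLt, hkb] at this
      exact this

end Main2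

section Main3
variable {m : ℕ}

lemma sum_ite_split (P B : Fin 8 → Prop) [DecidablePred P] [DecidablePred B] (X Y : ℕ) :
    (∑ b : Fin 8, if P b then (if B b then X else Y) else 0)
      = (Finset.univ.filter (fun b => P b ∧ B b)).card * X
        + (Finset.univ.filter (fun b => P b ∧ ¬ B b)).card * Y := by
  have hpt : ∀ b, (if P b then (if B b then X else Y) else 0)
      = (if P b ∧ B b then X else 0) + (if P b ∧ ¬ B b then Y else 0) := by
    intro b
    by_cases h1 : P b <;> by_cases h2 : B b <;> simp [h1, h2]
  rw [Finset.sum_congr rfl (fun b _ => hpt b), Finset.sum_add_distrib,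
    ← Finset.sum_filter, ← Finset.sum_filter, Finset.sum_const, Finset.sum_const,
    smul_eq_mul, smul_eq_mul]

lemma notLR {j : ℕ} (c : Fin m → Fin 8) (h : ¬ j < m) :
    extVal c j ∉ Lset ∧ extVal c j ∉ Rset := by
  rw [extVal_ge c (by omega)]
  exact ⟨by decide, by decide⟩

lemma opY1_eq (c : Fin m → Fin 8) (i : ℕ) :
    opY1 c i = (z1 (extVal c (i+2)) (extVal c (i+1)) (extVal c i) : ℤ) := by
  unfold opY1 z1
  by_cases h : i + 2 < m
  · by_cases hcnd : ((extVal c (i + 2) ∈ Lset ∧ extVal c (i + 1) = 2 ∧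
          extVal c i ∈ ({2, 3} : Finset ℕ)) ∨
        (extVal c (i + 2) ∈ Rset ∧ extVal c (i + 1) = 5 ∧
          extVal c i ∈ ({4, 5} : Finset ℕ)))
    · rw [if_pos ⟨h, hcnd⟩, if_pos hcnd]; rfl
    · rw [if_neg (fun hx => hcnd hx.2), if_neg hcnd]; rfl
  · obtain ⟨hL, hR⟩ := notLR c h
    rw [if_neg (fun hx => h hx.1), if_neg ?_]
    · rfl
    · rintro (⟨hh, -, -⟩ | ⟨hh, -, -⟩)
      · exact hL hh
      · exact hR hh

lemma opY2_eq (c : Fin m → Fin 8) (i : ℕ) :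
    opY2 c i = (z2 (extVal c (i+2)) (extVal c (i+1)) (extVal c i) : ℤ) := by
  unfold opY2 z2
  by_cases h : i + 2 < m
  · by_cases hcnd : (extVal c (i + 2) ∈ Lset ∧ extVal c (i + 1) = 2 ∧
        extVal c i ∈ ({6, 7} : Finset ℕ))
    · rw [if_pos ⟨h, hcnd⟩, if_pos hcnd]; rfl
    · rw [if_neg (fun hx => hcnd hx.2), if_neg hcnd]; rfl
  · obtain ⟨hL, hR⟩ := notLR c h
    rw [if_neg (fun hx => h hx.1), if_neg (fun hx => hL hx.1)]
    rfl

lemma opY3_eq (c : Fin m → Fin 8) (i : ℕ) :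
    opY3 c i = (z3 (extVal c (i+2)) (extVal c (i+1)) (extVal c i) : ℤ) := by
  unfold opY3 z3
  have hiff : (opY1 c i = 0 ∧ opY2 c i = 0 ∧ i + 1 < m ∧
      ((extVal c (i + 1) ∈ Lset ∧ extVal c i ∈ ({3, 4, 5, 6, 7} : Finset ℕ)) ∨
        (extVal c (i + 1) ∈ Rset ∧ extVal c i ∈ ({6, 7} : Finset ℕ))))
      ↔ (z1 (extVal c (i+2)) (extVal c (i+1)) (extVal c i) = 0 ∧
          z2 (extVal c (i+2)) (extVal c (i+1)) (extVal c i) = 0 ∧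
          ((extVal c (i + 1) ∈ Lset ∧ extVal c i ∈ ({3, 4, 5, 6, 7} : Finset ℕ)) ∨
            (extVal c (i + 1) ∈ Rset ∧ extVal c i ∈ ({6, 7} : Finset ℕ)))) := by
    rw [opY1_eq, opY2_eq, Nat.cast_eq_zero, Nat.cast_eq_zero]
    constructor
    · rintro ⟨h1, h2, -, h4⟩; exact ⟨h1, h2, h4⟩
    · rintro ⟨h1, h2, h4⟩
      refine ⟨h1, h2, ?_, h4⟩
      by_contra hm
      obtain ⟨hL, hR⟩ := notLR c hm
      rcases h4 with ⟨hh, -⟩ | ⟨hh, -⟩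
      · exact hL hh
      · exact hR hh
  rw [if_congr hiff rfl rfl]
  split_ifs <;> rfl

lemma per_k (f : ℕ → ℕ) (hf0 : f 0 = 2) (hf1 : f 1 = 8)
    (hrec : ∀ k : ℕ, 2 ≤ k → f k = 7 * f (k - 1) + 4 * f (k - 2))
    (c : Fin m → Fin 8) (hc : c ∈ NN m) (k : Fin m) :
    (8 : ℤ) * ((Sk c k).card : ℤ) =
      (((c k : ℕ) : ℤ) - 2 * opY1 c (k : ℕ) - 4 * opY2 c (k : ℕ) - opY3 c (k : ℕ)) *
          (f ((k : ℕ) + 1) : ℤ)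
        + 4 * opY3 c (k : ℕ) * (f (k : ℕ) : ℤ) := by
  classical
  have hEk : extVal c (k : ℕ) = ((c k : ℕ)) := by
    rw [extVal_lt c k.isLt, Fin.eta]
  have hcN := hc
  simp only [NN, Finset.mem_filter, Finset.mem_univ, true_and] at hcN
  have hFt : ¬ FnB (extVal c ((k:ℕ)+2)) (extVal c ((k:ℕ)+1)) ((c k : ℕ)) := by
    have := hcN (k : ℕ) k.isLt
    rwa [hEk] at this
  have h1 : (Sk c k).card = ∑ b : Fin 8, ((Sk c k).filter (fun w => w k = b)).card :=
    Finset.card_eq_sum_card_fiberwise (fun x _ => Finset.mem_univ _)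
  have h2 : ∀ b : Fin 8, ((Sk c k).filter (fun w => w k = b)).card
      = if ((b : ℕ) < ((c k) : ℕ) ∧
            ¬ FnB (extVal c ((k:ℕ)+2)) (extVal c ((k:ℕ)+1)) (b:ℕ))
        then (if blk (b:ℕ) (extVal c ((k:ℕ)+1)) then Qc (k:ℕ) else Pc (k:ℕ)) else 0 := by
    intro b
    rw [Sk_fiber c hc k b,
      CW_card (k:ℕ) (b:ℕ) (extVal c ((k:ℕ)+1)) b.isLt (extVal_le c _)]
  have hsum : (Sk c k).card =
      (Finset.univ.filter (fun b : Fin 8 => (((b : ℕ) < ((c k) : ℕ) ∧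
          ¬ FnB (extVal c ((k:ℕ)+2)) (extVal c ((k:ℕ)+1)) (b:ℕ))) ∧
          blk (b:ℕ) (extVal c ((k:ℕ)+1)))).card * Qc (k:ℕ)
      + (Finset.univ.filter (fun b : Fin 8 => (((b : ℕ) < ((c k) : ℕ) ∧
          ¬ FnB (extVal c ((k:ℕ)+2)) (extVal c ((k:ℕ)+1)) (b:ℕ))) ∧
          ¬ blk (b:ℕ) (extVal c ((k:ℕ)+1)))).card * Pc (k:ℕ) := by
    rw [h1, Finset.sum_congr rfl (fun b _ => h2 b)]
    exact sum_ite_split _ _ _ _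
  rw [hsum]
  clear h1 h2 hsum
  have hb2 : extVal c ((k:ℕ)+2) < 9 := by have := extVal_le c ((k:ℕ)+2); omega
  have hb1 : extVal c ((k:ℕ)+1) < 9 := by have := extVal_le c ((k:ℕ)+1); omega
  obtain ⟨K1, K2⟩ := key (extVal c ((k:ℕ)+2)) hb2 (extVal c ((k:ℕ)+1)) hb1
    ((c k : ℕ)) (c k).isLt hFt
  rw [opY1_eq, opY2_eq, opY3_eq, hEk]
  have hfp : ((f ((k:ℕ)+1) : ℕ) : ℤ) = 8 * (Pc (k:ℕ) : ℤ) := by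
    exact_mod_cast congrArg (Nat.cast : ℕ → ℤ) (fP f hf0 hf1 hrec (k:ℕ))
  have hfk : ((f (k:ℕ) : ℕ) : ℤ) = 2 * (Qc (k:ℕ) : ℤ) := by
    have := fQ f hf0 hf1 hrec (k:ℕ)
    exact_mod_cast congrArg (Nat.cast : ℕ → ℤ) (by omega : f (k:ℕ) = 2 * Qc (k:ℕ))
  rw [hfp, hfk]
  set cB := (Finset.univ.filter (fun b : Fin 8 => (((b : ℕ) < ((c k) : ℕ) ∧
      ¬ FnB (extVal c ((k:ℕ)+2)) (extVal c ((k:ℕ)+1)) (b:ℕ))) ∧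
      blk (b:ℕ) (extVal c ((k:ℕ)+1)))).card with hcB
  set cF := (Finset.univ.filter (fun b : Fin 8 => (((b : ℕ) < ((c k) : ℕ) ∧
      ¬ FnB (extVal c ((k:ℕ)+2)) (extVal c ((k:ℕ)+1)) (b:ℕ))) ∧
      ¬ blk (b:ℕ) (extVal c ((k:ℕ)+1)))).card with hcF
  have K1' : (cF : ℤ) = ((c k : ℕ) : ℤ)
      - 2 * (z1 (extVal c ((k:ℕ)+2)) (extVal c ((k:ℕ)+1)) ((c k : ℕ)) : ℤ)
      - 4 * (z2 (extVal c ((k:ℕ)+2)) (extVal c ((k:ℕ)+1)) ((c k : ℕ)) : ℤ)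
      - (z3 (extVal c ((k:ℕ)+2)) (extVal c ((k:ℕ)+1)) ((c k : ℕ)) : ℤ) := by
    omega
  have K2' : (cB : ℤ) = (z3 (extVal c ((k:ℕ)+2)) (extVal c ((k:ℕ)+1)) ((c k : ℕ)) : ℤ) := by
    exact_mod_cast congrArg (Nat.cast : ℕ → ℤ) K2
  push_cast
  rw [K1', K2']
  ring

end Main3
end OP

theorem stmt12 (m : ℕ) (hm : 1 ≤ m) (f : ℕ → ℕ) (hf0 : f 0 = 2) (hf1 : f 1 = 8)
    (hrec : ∀ k : ℕ, 2 ≤ k → f k = 7 * f (k - 1) + 4 * f (k - 2))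
    (c : Fin m → Fin 8) (hc : c ∈ OPC m) :
    8 * (lexIndex (OPC m) c : ℤ) =
      ∑ i : Fin m,
        ((((c i : ℕ) : ℤ) - 2 * opY1 c (i : ℕ) - 4 * opY2 c (i : ℕ) - opY3 c (i : ℕ)) *
            (f ((i : ℕ) + 1) : ℤ)
          + 4 * opY3 c (i : ℕ) * (f (i : ℕ) : ℤ)) := by
  classical
  have hcN : c ∈ OP.NN m := (OP.mem_OPC_iff c).1 hc
  rw [OP.lex_card c, OP.decomp c, Finset.card_biUnion (OP.disj c)]
  push_cast
  rw [Finset.mul_sum]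
  exact Finset.sum_congr rfl (fun k _ => OP.per_k f hf0 hf1 hrec c hcN k)
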